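/- Let ψ: [0,∞) → ℝ be twice differentiable on (0,∞) with lim_{s→0⁺} ψ(s) = 0 and lim_{s→0⁺} ψ'(s) = 0, and define ω(x) = ψ(|x|) for x ≠ 0 in ℝⁿ, ω(0) = 0, where ψ is C² on (0,∞). Then ω ∈ C²(ℝⁿ) if and only if lim_{s→0⁺} ψ''(s) exists and is finite. -/

import Mathlib

open Filter Topology Metric Set

open RealInnerProductSpace
set_option maxHeartbeats 2000000
set_option synthInstance.maxHeartbeats 1000000

variable {E : Type*} [NormedAddCommGroup E] [InnerProductSpace ℝ E]

lemma hasFDerivAt_norm' {x : E} (hx : x ≠ 0) :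
    HasFDerivAt (fun y : E => ‖y‖) (‖x‖⁻¹ • innerSL ℝ x) x := by
  have h0 : ‖x‖ ≠ 0 := norm_ne_zero_iff.2 hx
  have hi : HasFDerivAt (fun y : E => ⟪y, y⟫)
      ((fderivInnerCLM ℝ (x, x)).comp ((ContinuousLinearMap.id ℝ E).prod
        (ContinuousLinearMap.id ℝ E))) x :=
    (hasFDerivAt_id x).inner ℝ (hasFDerivAt_id x)
  have hxx : ⟪x, x⟫ ≠ 0 := by
    rw [real_inner_self_eq_norm_mul_norm]; positivity
  have hs := HasDerivAt.comp_hasFDerivAt (f := fun y : E => ⟪y, y⟫) x (Real.hasDerivAt_sqrt hxx) hi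
  have heq : ((fun t => Real.sqrt t) ∘ fun y : E => ⟪y, y⟫) = fun y : E => ‖y‖ := by
    funext y
    simp only [Function.comp_apply]
    rw [real_inner_self_eq_norm_mul_norm, Real.sqrt_mul_self (norm_nonneg y)]
  rw [heq] at hs
  refine hs.congr_fderiv (Eq.symm ?_)
  ext u
  simp only [ContinuousLinearMap.smul_apply, ContinuousLinearMap.coe_comp', Function.comp_apply,
    ContinuousLinearMap.prod_apply, ContinuousLinearMap.coe_id', id_eq, fderivInnerCLM_apply,
    innerSL_apply_apply]
  rw [real_inner_self_eq_norm_mul_norm, Real.sqrt_mul_self (norm_nonneg x),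
    real_inner_comm u x]
  field_simp
  ring

lemma mvt_ratio {f f' : ℝ → ℝ}
    (hder : ∀ s ∈ Set.Ioi (0:ℝ), HasDerivAt f (f' s) s)
    (hf0 : Tendsto f (𝓝[>] 0) (𝓝 0))
    (hf'0 : Tendsto f' (𝓝[>] 0) (𝓝 0)) :
    Tendsto (fun s => f s / s) (𝓝[>] 0) (𝓝 0) := by
  rw [Metric.tendsto_nhdsWithin_nhds]
  intro ε hε
  obtain ⟨δ, hδ, hb⟩ := Metric.tendsto_nhdsWithin_nhds.1 hf'0 (ε/2) (by positivity)
  refine ⟨δ, hδ, fun {s} hs hsd => ?_⟩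
  have hs0 : (0:ℝ) < s := hs
  -- |f s| ≤ (ε/2) * s
  have key : |f s| ≤ (ε/2) * s := by
    have hev : ∀ᶠ a in 𝓝[>] (0:ℝ), a < s := by
      exact eventually_nhdsWithin_of_eventually_nhds (Filter.Tendsto.eventually_lt_const hs0 tendsto_id)
    have hineq : ∀ᶠ a in 𝓝[>] (0:ℝ), |f s - f a| ≤ (ε/2) * (s - a) := by
      filter_upwards [hev, self_mem_nhdsWithin] with a ha ha0
      have hsub : Set.Icc a s ⊆ Set.Ioi 0 := fun t ht => lt_of_lt_of_le ha0 ht.1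
      have hC : ∀ t ∈ Set.Icc a s, ‖f' t‖ ≤ ε/2 := by
        intro t ht
        have ht0 : (0:ℝ) < t := hsub ht
        have htd : dist t 0 < δ := by
          rw [Real.dist_eq, sub_zero, abs_of_pos ht0]
          calc t ≤ s := ht.2
          _ = dist s 0 := by rw [Real.dist_eq, sub_zero, abs_of_pos hs0]
          _ < δ := hsd
        have := hb ht0 htd
        rw [Real.dist_eq, sub_zero] at this
        exact le_of_lt this
      have := (convex_Icc a s).norm_image_sub_le_of_norm_hasDerivWithin_le
        (fun t ht => (hder t (hsub ht)).hasDerivWithinAt) hC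
        (Set.left_mem_Icc.2 ha.le) (Set.right_mem_Icc.2 ha.le)
      calc |f s - f a| = ‖f s - f a‖ := rfl
        _ ≤ (ε/2) * ‖s - a‖ := this
        _ = (ε/2) * (s - a) := by rw [Real.norm_eq_abs, abs_of_nonneg (by linarith)]
    have h1 : Tendsto (fun a => |f s - f a|) (𝓝[>] (0:ℝ)) (𝓝 |f s|) := by
      have : Tendsto (fun a => f s - f a) (𝓝[>] (0:ℝ)) (𝓝 (f s - 0)) :=
        tendsto_const_nhds.sub hf0
      simpa using this.abs
    have h2 : Tendsto (fun a => (ε/2) * (s - a)) (𝓝[>] (0:ℝ)) (𝓝 ((ε/2) * s)) := by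
      have : Tendsto (fun a : ℝ => (ε/2) * (s - a)) (𝓝 (0:ℝ)) (𝓝 ((ε/2) * (s - 0))) :=
        (tendsto_const_nhds.sub tendsto_id).const_mul _
      simpa using this.mono_left nhdsWithin_le_nhds
    exact le_of_tendsto_of_tendsto h1 h2 hineq
  rw [Real.dist_eq, sub_zero]
  calc |f s / s| = |f s| / s := by rw [abs_div, abs_of_pos hs0]
      _ ≤ ε/2 := by rw [div_le_iff₀ hs0]; exact key
      _ < ε := by linarith


theorem forward_aux {ψ : ℝ → ℝ} {F : E → ℝ} (hFne : ∀ x : E, x ≠ 0 → F x = ψ ‖x‖)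
    {e : E} (he : ‖e‖ = 1) (h : ContDiff ℝ 2 F) :
    ∃ L : ℝ, Tendsto (deriv (deriv ψ)) (𝓝[>] 0) (𝓝 L) := by
  have he0 : e ≠ 0 := by intro h0; rw [h0, norm_zero] at he; norm_num at he
  set φ : ℝ → ℝ := fun t => F (t • e) with hφdef
  have hφ : ContDiff ℝ 2 φ := h.comp (contDiff_id.smul contDiff_const)
  have hφψ : ∀ t ∈ Set.Ioi (0:ℝ), ψ t = φ t := by
    intro t ht
    rw [hφdef]
    simp only
    rw [hFne (t • e) (smul_ne_zero (ne_of_gt ht) he0), norm_smul, he, Real.norm_eq_abs,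
      abs_of_pos ht, mul_one]
  have h1 : ∀ s ∈ Set.Ioi (0:ℝ), deriv ψ s = deriv φ s := fun s hs =>
    Filter.EventuallyEq.deriv_eq (eventually_of_mem (Ioi_mem_nhds hs) hφψ)
  have h2 : ∀ s ∈ Set.Ioi (0:ℝ), deriv (deriv ψ) s = deriv (deriv φ) s := fun s hs =>
    Filter.EventuallyEq.deriv_eq (eventually_of_mem (Ioi_mem_nhds hs) h1)
  have hφ1 : ContDiff ℝ 1 (deriv φ) := by
    rw [show (2 : WithTop ℕ∞) = 1 + 1 from rfl, contDiff_succ_iff_deriv] at hφ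
    exact hφ.2.2
  have hcont : Continuous (deriv (deriv φ)) := by
    rw [show (1 : WithTop ℕ∞) = 0 + 1 from rfl, contDiff_succ_iff_deriv] at hφ1
    exact contDiff_zero.mp hφ1.2.2
  refine ⟨deriv (deriv φ) 0, ?_⟩
  have hT : Tendsto (deriv (deriv φ)) (𝓝[>] (0:ℝ)) (𝓝 (deriv (deriv φ) 0)) :=
    (hcont.tendsto 0).mono_left nhdsWithin_le_nhds
  exact Filter.Tendsto.congr'
    (eventually_of_mem self_mem_nhdsWithin fun s hs => (h2 s hs).symm) hT

theorem backward_aux {ψ : ℝ → ℝ} (hψC2 : ContDiffOn ℝ 2 ψ (Set.Ioi 0))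
    (hψ0 : Tendsto ψ (𝓝[>] 0) (𝓝 0))
    (hψ'0 : Tendsto (deriv ψ) (𝓝[>] 0) (𝓝 0))
    {L : ℝ} (hL : Tendsto (deriv (deriv ψ)) (𝓝[>] 0) (𝓝 L))
    {F : E → ℝ} (hF0 : F 0 = 0) (hFne : ∀ x : E, x ≠ 0 → F x = ψ ‖x‖) :
    ContDiff ℝ 2 F := by
  classical
  have hψd : ∀ s ∈ Set.Ioi (0:ℝ), HasDerivAt ψ (deriv ψ s) s := fun s hs =>
    ((hψC2.differentiableOn (by norm_num)).differentiableAt (Ioi_mem_nhds hs)).hasDerivAt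
  have hψ'C1 : ContDiffOn ℝ 1 (deriv ψ) (Set.Ioi 0) :=
    hψC2.deriv_of_isOpen isOpen_Ioi (by norm_num)
  have hψ'd : ∀ s ∈ Set.Ioi (0:ℝ), HasDerivAt (deriv ψ) (deriv (deriv ψ) s) s := fun s hs =>
    ((hψ'C1.differentiableOn one_ne_zero).differentiableAt (Ioi_mem_nhds hs)).hasDerivAt
  have hψ'cont : ContinuousOn (deriv ψ) (Set.Ioi 0) := hψ'C1.continuousOn
  have hψ''cont : ContinuousOn (deriv (deriv ψ)) (Set.Ioi 0) :=
    (hψ'C1.deriv_of_isOpen isOpen_Ioi (m := 0) (by norm_num)).continuousOn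
  set g : ℝ → ℝ := fun s => deriv ψ s / s with hgdef
  set g' : ℝ → ℝ := fun s => (deriv (deriv ψ) s * s - deriv ψ s * 1) / s ^ 2 with hg'def
  have hgd : ∀ s ∈ Set.Ioi (0:ℝ), HasDerivAt g (g' s) s := fun s hs =>
    (hψ'd s hs).div (hasDerivAt_id s) (ne_of_gt hs)
  have hrat0 : Tendsto (fun s => ψ s / s) (𝓝[>] 0) (𝓝 0) := mvt_ratio hψd hψ0 hψ'0
  have hg : Tendsto g (𝓝[>] (0:ℝ)) (𝓝 L) := by
    have h1 : Tendsto (fun s => (deriv ψ s - L * s) / s) (𝓝[>] (0:ℝ)) (𝓝 0) := by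
      apply mvt_ratio (f' := fun s => deriv (deriv ψ) s - L * 1)
      · exact fun s hs => (hψ'd s hs).sub ((hasDerivAt_id s).const_mul L)
      · have h2 : Tendsto (fun s : ℝ => L * s) (𝓝[>] (0:ℝ)) (𝓝 (L * 0)) :=
          ((continuous_const.mul continuous_id).tendsto 0).mono_left nhdsWithin_le_nhds
        simpa using hψ'0.sub h2
      · simpa using hL.sub (tendsto_const_nhds (x := L * 1))
    have h2 := h1.add (tendsto_const_nhds (x := L))
    rw [zero_add] at h2
    apply h2.congr'
    filter_upwards [self_mem_nhdsWithin] with s hs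
    have hs0 : s ≠ 0 := ne_of_gt hs
    simp only [hgdef]
    field_simp
    ring
  set G : E → (E →L[ℝ] ℝ) := fun x => if x = 0 then 0 else g ‖x‖ • innerSL ℝ x with hGdef
  have hGne : ∀ x : E, x ≠ 0 → HasFDerivAt F (G x) x := by
    intro x hx
    have hr : (0:ℝ) < ‖x‖ := norm_pos_iff.2 hx
    have h1 := HasDerivAt.comp_hasFDerivAt (f := fun y : E => ‖y‖) x
      (hψd ‖x‖ hr) (hasFDerivAt_norm' hx)
    have h2 : G x = deriv ψ ‖x‖ • (‖x‖⁻¹ • innerSL ℝ x) := by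
      rw [hGdef]
      simp only [if_neg hx, smul_smul]
      congr 1
    rw [h2]
    apply h1.congr_of_eventuallyEq
    filter_upwards [isOpen_compl_singleton.mem_nhds hx] with y hy
    exact hFne y hy
  have hG0 : HasFDerivAt F (0 : E →L[ℝ] ℝ) 0 := by
    rw [hasFDerivAt_iff_isLittleO_nhds_zero, Asymptotics.isLittleO_iff]
    intro c hc
    obtain ⟨δ, hδ, hbnd⟩ := Metric.tendsto_nhdsWithin_nhds.1 hrat0 c hc
    rw [Metric.eventually_nhds_iff]
    refine ⟨δ, hδ, fun {y} hy => ?_⟩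
    rcases eq_or_ne y 0 with rfl | hy0
    · simp [hF0]
    · have hny : 0 < ‖y‖ := norm_pos_iff.2 hy0
      have h3 : dist ‖y‖ 0 < δ := by
        rw [Real.dist_eq, sub_zero, abs_of_pos hny]
        simpa [dist_zero_right] using hy
      have h4 := hbnd hny h3
      rw [Real.dist_eq, sub_zero, abs_div, abs_of_pos hny, div_lt_iff₀ hny] at h4
      simp only [zero_add, hF0, hFne y hy0, sub_zero, ContinuousLinearMap.zero_apply]
      calc ‖ψ ‖y‖‖ = |ψ ‖y‖| := rfl
        _ ≤ c * ‖y‖ := le_of_lt h4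
  have hGx : ∀ x : E, HasFDerivAt F (G x) x := by
    intro x
    rcases eq_or_ne x 0 with rfl | hx
    · rw [show G 0 = 0 from if_pos rfl]; exact hG0
    · exact hGne x hx
  set I : E →L[ℝ] E →L[ℝ] ℝ := innerSL ℝ with hIdef
  have hIapp : ∀ u : E, I u = innerSL ℝ u := fun u => rfl
  have hinner_norm : ‖I‖ ≤ 1 :=
    ContinuousLinearMap.opNorm_le_bound _ zero_le_one
      (fun x => by rw [hIapp, innerSL_apply_norm, one_mul])
  set H : E → (E →L[ℝ] E →L[ℝ] ℝ) := fun x =>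
    if x = 0 then L • I
    else g ‖x‖ • I +
      (g' ‖x‖ • (‖x‖⁻¹ • innerSL ℝ x)).smulRight (innerSL ℝ x) with hHdef
  have hHne : ∀ x : E, x ≠ 0 → HasFDerivAt G (H x) x := by
    intro x hx
    have hr : (0:ℝ) < ‖x‖ := norm_pos_iff.2 hx
    have hc : HasFDerivAt (fun y : E => g ‖y‖) (g' ‖x‖ • (‖x‖⁻¹ • innerSL ℝ x)) x :=
      HasDerivAt.comp_hasFDerivAt (f := fun y : E => ‖y‖) x (hgd ‖x‖ hr) (hasFDerivAt_norm' hx)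
    have hlin : HasFDerivAt (fun y : E => innerSL ℝ y) I x :=
      I.hasFDerivAt
    have hmul := hc.smul hlin
    have h2 : H x = g ‖x‖ • I +
        (g' ‖x‖ • (‖x‖⁻¹ • innerSL ℝ x)).smulRight (innerSL ℝ x) := by
      rw [hHdef]; simp only [if_neg hx]
    rw [h2]
    apply hmul.congr_of_eventuallyEq
    filter_upwards [isOpen_compl_singleton.mem_nhds hx] with y hy
    rw [hGdef]
    simp only [if_neg (show y ≠ 0 from hy)]
    rfl
  have hH0 : HasFDerivAt G (H 0) 0 := by
    have hH0eq : H 0 = L • I := by rw [hHdef]; simp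
    rw [hH0eq, hasFDerivAt_iff_isLittleO_nhds_zero, Asymptotics.isLittleO_iff]
    intro c hc
    obtain ⟨δ, hδ, hbnd⟩ := Metric.tendsto_nhdsWithin_nhds.1 hg c hc
    rw [Metric.eventually_nhds_iff]
    refine ⟨δ, hδ, fun {y} hy => ?_⟩
    rcases eq_or_ne y 0 with rfl | hy0
    · simp
    · have hny : 0 < ‖y‖ := norm_pos_iff.2 hy0
      have h3 : dist ‖y‖ 0 < δ := by
        rw [Real.dist_eq, sub_zero, abs_of_pos hny]
        simpa [dist_zero_right] using hy
      have hgb : |g ‖y‖ - L| < c := by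
        have := hbnd hny h3; rwa [Real.dist_eq] at this
      have hGy : G (0 + y) - G 0 - (L • I) y
          = (g ‖y‖ - L) • innerSL ℝ y := by
        simp only [hGdef, hIdef, zero_add, if_neg hy0, if_pos rfl, if_true, sub_zero,
          ContinuousLinearMap.smul_apply, sub_smul]
      rw [hGy]
      calc ‖(g ‖y‖ - L) • innerSL ℝ y‖ = ‖g ‖y‖ - L‖ * ‖innerSL ℝ y‖ :=
            norm_smul (g ‖y‖ - L) (innerSL ℝ y)
        _ = |g ‖y‖ - L| * ‖y‖ := by rw [Real.norm_eq_abs, innerSL_apply_norm]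
        _ ≤ c * ‖y‖ := mul_le_mul_of_nonneg_right hgb.le (norm_nonneg y)
  have hHx : ∀ x : E, HasFDerivAt G (H x) x := by
    intro x
    rcases eq_or_ne x 0 with rfl | hx
    · exact hH0
    · exact hHne x hx
  -- continuity of H
  have hgcont : ContinuousOn g (Set.Ioi (0:ℝ)) :=
    hψ'cont.div continuousOn_id (fun s hs => ne_of_gt hs)
  have hg'cont : ContinuousOn g' (Set.Ioi (0:ℝ)) := by
    apply ContinuousOn.div
    · exact (hψ''cont.mul continuousOn_id).sub (hψ'cont.mul continuousOn_const)
    · exact (continuousOn_id.pow 2)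
    · exact fun s hs => pow_ne_zero 2 (ne_of_gt hs)
  have hHcont : Continuous H := by
    rw [continuous_iff_continuousAt]
    intro x
    rcases eq_or_ne x 0 with rfl | hx
    · have hεδ : ∀ ε > 0, ∃ δ > 0, ∀ ⦃y : E⦄, dist y 0 < δ → dist (H y) (H 0) < ε := by
        intro ε hε
        have hq : Tendsto (fun s => |g s - L| + |deriv (deriv ψ) s - g s|) (𝓝[>] (0:ℝ)) (𝓝 0) := by
          have t1 : Tendsto (fun s => |g s - L|) (𝓝[>] (0:ℝ)) (𝓝 0) := by
            simpa using (hg.sub (tendsto_const_nhds (x := L))).abs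
          have t2 : Tendsto (fun s => |deriv (deriv ψ) s - g s|) (𝓝[>] (0:ℝ)) (𝓝 0) := by
            simpa using (hL.sub hg).abs
          simpa using t1.add t2
        obtain ⟨δ, hδ, hbnd⟩ := Metric.tendsto_nhdsWithin_nhds.1 hq (ε/2) (by positivity)
        refine ⟨δ, hδ, fun {y} hy => ?_⟩
        rcases eq_or_ne y 0 with rfl | hy0
        · calc dist (H (0:E)) (H 0) = ‖H 0 - H 0‖ := dist_eq_norm (H 0) (H 0)
            _ = ‖(0 : E →L[ℝ] E →L[ℝ] ℝ)‖ := congrArg _ (by ext u v; simp)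
            _ = 0 := norm_zero (E := E →L[ℝ] E →L[ℝ] ℝ)
            _ < ε := hε
        · have hny : 0 < ‖y‖ := norm_pos_iff.2 hy0
          have h3 : dist ‖y‖ 0 < δ := by
            rw [Real.dist_eq, sub_zero, abs_of_pos hny]
            simpa [dist_zero_right] using hy
          have hqb : |g ‖y‖ - L| + |deriv (deriv ψ) ‖y‖ - g ‖y‖| < ε/2 := by
            have h5 := hbnd hny h3
            rw [Real.dist_eq, sub_zero] at h5
            calc |g ‖y‖ - L| + |deriv (deriv ψ) ‖y‖ - g ‖y‖|
                ≤ |(|g ‖y‖ - L| + |deriv (deriv ψ) ‖y‖ - g ‖y‖|)| := le_abs_self _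
              _ < ε/2 := h5
          have hsplit : H y - H 0 = (g ‖y‖ - L) • I +
              (g' ‖y‖ • (‖y‖⁻¹ • innerSL ℝ y)).smulRight (innerSL ℝ y) := by
            rw [hHdef]
            simp only [if_neg hy0, if_pos rfl, if_true, ite_true]
            ext u v
            simp only [ContinuousLinearMap.sub_apply, ContinuousLinearMap.add_apply,
              ContinuousLinearMap.smul_apply, ContinuousLinearMap.smulRight_apply,
              ContinuousLinearMap.coe_smul', Pi.smul_apply, smul_eq_mul]
            ring
          have hkey : |g' ‖y‖| * ‖y‖ = |deriv (deriv ψ) ‖y‖ - g ‖y‖| := by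
            rw [← abs_of_pos hny, ← abs_mul]
            congr 1
            rw [hg'def, hgdef]
            field_simp
            rw [abs_of_pos hny]; ring
          have hB : ‖(g' ‖y‖ • (‖y‖⁻¹ • innerSL ℝ y)).smulRight (innerSL ℝ y)‖
              = |g' ‖y‖| * ‖y‖ := by
            rw [ContinuousLinearMap.norm_smulRight_apply,
              norm_smul (g' ‖y‖) (‖y‖⁻¹ • innerSL ℝ y), norm_smul ‖y‖⁻¹ (innerSL ℝ y),
              innerSL_apply_norm, Real.norm_eq_abs, Real.norm_eq_abs,
              abs_of_pos (inv_pos.2 hny)]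
            field_simp
          calc dist (H y) (H 0) = ‖H y - H 0‖ := dist_eq_norm (H y) (H 0)
            _ = ‖(g ‖y‖ - L) • I +
                (g' ‖y‖ • (‖y‖⁻¹ • innerSL ℝ y)).smulRight (innerSL ℝ y)‖ := by rw [hsplit]
            _ ≤ ‖(g ‖y‖ - L) • I‖ +
                ‖(g' ‖y‖ • (‖y‖⁻¹ • innerSL ℝ y)).smulRight (innerSL ℝ y)‖ :=
                norm_add_le ((g ‖y‖ - L) • I)
                  ((g' ‖y‖ • (‖y‖⁻¹ • innerSL ℝ y)).smulRight (innerSL ℝ y))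
            _ ≤ |g ‖y‖ - L| + |deriv (deriv ψ) ‖y‖ - g ‖y‖| := by
                apply add_le_add
                · calc ‖(g ‖y‖ - L) • I‖
                      ≤ ‖g ‖y‖ - L‖ * ‖I‖ :=
                        ContinuousLinearMap.opNorm_smul_le (g ‖y‖ - L) I
                    _ = |g ‖y‖ - L| * ‖I‖ := by rw [Real.norm_eq_abs]
                    _ ≤ |g ‖y‖ - L| * 1 := mul_le_mul_of_nonneg_left hinner_norm (abs_nonneg _)
                    _ = |g ‖y‖ - L| := mul_one _
                · rw [hB, hkey]
            _ < ε/2 := hqb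
            _ < ε := by linarith
      exact Metric.continuousAt_iff.2 hεδ
    · -- continuity away from 0
      have hopen : IsOpen {y : E | y ≠ 0} := isOpen_compl_singleton
      have hmem : x ∈ {y : E | y ≠ 0} := hx
      have hc1 : ContinuousOn (fun y : E => g' ‖y‖ • (‖y‖⁻¹ • innerSL ℝ y))
          {y : E | y ≠ 0} := by
        apply ContinuousOn.fun_smul
        · exact hg'cont.comp continuous_norm.continuousOn
            (fun y hy => norm_pos_iff.2 hy)
        · apply ContinuousOn.fun_smul
          · exact (continuousOn_id.norm.inv₀ (fun y hy => norm_ne_zero_iff.2 hy))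
          · exact (I.continuous.continuousOn)
      have hc2 : ContinuousOn
          (fun y : E => (g' ‖y‖ • (‖y‖⁻¹ • innerSL ℝ y)).smulRight (innerSL ℝ y))
          {y : E | y ≠ 0} := by
        have := ContinuousOn.clm_apply
          (f := fun y : E => ContinuousLinearMap.smulRightL ℝ E (E →L[ℝ] ℝ)
            (g' ‖y‖ • (‖y‖⁻¹ • innerSL ℝ y)))
          (g := fun y : E => innerSL ℝ y)
          ((ContinuousLinearMap.smulRightL ℝ E (E →L[ℝ] ℝ)).continuous.comp_continuousOn hc1)
          (I.continuous.continuousOn)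
        exact this
      have hc0 : ContinuousOn (fun y : E => g ‖y‖ • I)
          {y : E | y ≠ 0} := by
        apply ContinuousOn.fun_smul
        · exact hgcont.comp continuous_norm.continuousOn (fun y hy => norm_pos_iff.2 hy)
        · exact continuousOn_const
      have hTG : IsTopologicalAddGroup (E →L[ℝ] E →L[ℝ] ℝ) := inferInstance
      haveI : ContinuousAdd (E →L[ℝ] E →L[ℝ] ℝ) := hTG.toContinuousAdd
      have hbranch : ContinuousAt (fun y : E => g ‖y‖ • I +
          (g' ‖y‖ • (‖y‖⁻¹ • innerSL ℝ y)).smulRight (innerSL ℝ y)) x :=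
        (hc0.add hc2).continuousAt (hopen.mem_nhds hmem)
      apply hbranch.congr
      filter_upwards [hopen.mem_nhds hmem] with y hy
      rw [hHdef]; simp only [if_neg hy]
  have hG1 : ContDiff ℝ 1 G := by
    rw [contDiff_one_iff_fderiv]
    refine ⟨fun x => (hHx x).differentiableAt, ?_⟩
    rw [show fderiv ℝ G = H from funext fun x => (hHx x).fderiv]
    exact hHcont
  rw [show (2 : WithTop ℕ∞) = 1 + 1 from rfl, contDiff_succ_iff_fderiv]
  refine ⟨fun x => (hGx x).differentiableAt, by simp, ?_⟩
  rw [show fderiv ℝ F = G from funext fun x => (hGx x).fderiv]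
  exact hG1

noncomputable def pd {n : ℕ} (i : Fin n) (f : EuclideanSpace ℝ (Fin n) → ℝ)
    (x : EuclideanSpace ℝ (Fin n)) : ℝ :=
  fderiv ℝ f x (EuclideanSpace.single i 1)

noncomputable def spd {n : ℕ} (i j : Fin n) (f : EuclideanSpace ℝ (Fin n) → ℝ)
    (x : EuclideanSpace ℝ (Fin n)) : ℝ :=
  pd i (pd j f) x

noncomputable def lap {n : ℕ} (f : EuclideanSpace ℝ (Fin n) → ℝ)
    (x : EuclideanSpace ℝ (Fin n)) : ℝ :=
  ∑ i, spd i i f x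

def TwiceDiffAt {n : ℕ} (f : EuclideanSpace ℝ (Fin n) → ℝ)
    (p : EuclideanSpace ℝ (Fin n)) : Prop :=
  (∀ᶠ x in 𝓝 p, DifferentiableAt ℝ f x) ∧
  DifferentiableAt ℝ (fderiv ℝ f) p ∧
  Tendsto (fun x => (f x - f p - fderiv ℝ f p (x - p)
      - (1/2) * fderiv ℝ (fderiv ℝ f) p (x - p) (x - p)) / ‖x - p‖^2)
    (𝓝[≠] p) (𝓝 0)

open scoped Classical in
theorem stmt7 (n : ℕ) (hn : 1 ≤ n) (ψ : ℝ → ℝ)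
    (hψC2 : ContDiffOn ℝ 2 ψ (Set.Ioi 0))
    (hψ0 : Tendsto ψ (𝓝[>] 0) (𝓝 0))
    (hψ'0 : Tendsto (deriv ψ) (𝓝[>] 0) (𝓝 0)) :
    ContDiff ℝ 2 (fun x : EuclideanSpace ℝ (Fin n) => if x = 0 then 0 else ψ ‖x‖) ↔
      ∃ L : ℝ, Tendsto (deriv (deriv ψ)) (𝓝[>] 0) (𝓝 L) := by
  constructor
  · intro h
    exact forward_aux (F := fun x : EuclideanSpace ℝ (Fin n) => if x = 0 then 0 else ψ ‖x‖)
      (fun x hx => if_neg hx)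
      (e := EuclideanSpace.single (⟨0, hn⟩ : Fin n) (1:ℝ))
      (by rw [EuclideanSpace.norm_single]; norm_num) h
  · rintro ⟨L, hL⟩
    exact backward_aux hψC2 hψ0 hψ'0 hL (if_pos rfl) (fun x hx => if_neg hx)
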